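/- arXiv:2405.18353 — 2 statements merged into one kernel-verified Lean document; each statement's English description precedes it below -/
import Mathlib

section
/- Let d be a positive integer, let μ be a probability measure on EuclideanSpace ℝ (Fin d) (the law of X_{t_{n−1}}), and let k : EuclideanSpace ℝ (Fin d) → EuclideanSpace ℝ (Fin d) → ℝ be such that: for every x₀, the function k(x₀, ·) is differentiable and strictly positive; for every x, the function x₀ ↦ k(x₀, x) is integrable with respect to μ; the marginal m(x) := ∫ k(x₀, x) dμ(x₀) is strictly positive and differentiable; and differentiation under the integral sign holds, i.e., for every x, x₀ ↦ ∇_x k(x₀, x) is integrable with respect to μ and ∇m(x) = ∫ ∇_x k(x₀, x) dμ(x₀). Let G : EuclideanSpace ℝ (Fin d) → EuclideanSpace ℝ (Fin d) be measurable, and assume the function (x₀, x) ↦ k(x₀, x) · ⟪∇_x (log k(x₀, ·))(x), G(x)⟫ is integrable with respect to μ ⊗ Lebesgue and the function x ↦ m(x) · ⟪∇(log ∘ m)(x), G(x)⟫ is integrable with respect to Lebesgue measure. Then ∫ m(x) · ⟪∇(log ∘ m)(x), G(x)⟫ dx = ∫∫ k(x₀, x) · ⟪∇_x (log k(x₀,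 ·))(x), G(x)⟫ dμ(x₀) dx. (This is the cross-term identity C₃ in the proof of Theorem 3 of the paper.) -/
open MeasureTheory

lemma gradient_log_comp {d : ℕ} (f : EuclideanSpace ℝ (Fin d) → ℝ)
    (x : EuclideanSpace ℝ (Fin d)) (hf : DifferentiableAt ℝ f x) (hx : f x ≠ 0) :
    gradient (fun y => Real.log (f y)) x = (f x)⁻¹ • gradient f x := by
  unfold gradient
  rw [fderiv.log hf hx, _root_.map_smul]

/-- Cross-term identity `C₃`: under differentiation under the integral sign for the
mixture `m x = ∫ k x₀ x dμ(x₀)`, the marginal-score cross term equals the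
conditional-score cross term:
`∫ m(x) ⟪∇(log ∘ m)(x), G(x)⟫ dx = ∫∫ k(x₀,x) ⟪∇ₓ(log k(x₀,·))(x), G(x)⟫ dμ(x₀) dx`. -/
theorem cross_term_identity
    (d : ℕ) (hd : 0 < d)
    (μ : Measure (EuclideanSpace ℝ (Fin d))) [IsProbabilityMeasure μ]
    (k : EuclideanSpace ℝ (Fin d) → EuclideanSpace ℝ (Fin d) → ℝ)
    (m : EuclideanSpace ℝ (Fin d) → ℝ)
    (hk_diff : ∀ x₀, Differentiable ℝ (k x₀))
    (hk_pos : ∀ x₀ x, 0 < k x₀ x)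
    (hk_int : ∀ x, Integrable (fun x₀ => k x₀ x) μ)
    (hm : ∀ x, m x = ∫ x₀, k x₀ x ∂μ)
    (hm_pos : ∀ x, 0 < m x)
    (hm_diff : Differentiable ℝ m)
    (hgrad_int : ∀ x, Integrable (fun x₀ => gradient (k x₀) x) μ)
    (hswap : ∀ x, gradient m x = ∫ x₀, gradient (k x₀) x ∂μ)
    (G : EuclideanSpace ℝ (Fin d) → EuclideanSpace ℝ (Fin d))
    (hG : Measurable G)
    (hint₁ : Integrable (fun q : EuclideanSpace ℝ (Fin d) × EuclideanSpace ℝ (Fin d) =>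
        k q.1 q.2 * (inner ℝ (gradient (fun y => Real.log (k q.1 y)) q.2) (G q.2) : ℝ))
      (μ.prod volume))
    (hint₂ : Integrable (fun x =>
        m x * (inner ℝ (gradient (Real.log ∘ m) x) (G x) : ℝ)) volume) :
    ∫ x, m x * (inner ℝ (gradient (Real.log ∘ m) x) (G x) : ℝ)
      = ∫ x, ∫ x₀,
          k x₀ x * (inner ℝ (gradient (fun y => Real.log (k x₀ y)) x) (G x) : ℝ) ∂μ := by
  have key : ∀ x, m x * (inner ℝ (gradient (Real.log ∘ m) x) (G x) : ℝ)
      = ∫ x₀, k x₀ x * (inner ℝ (gradient (fun y => Real.log (k x₀ y)) x) (G x) : ℝ) ∂μ := by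
    intro x
    have h1 : ∀ x₀, k x₀ x * (inner ℝ (gradient (fun y => Real.log (k x₀ y)) x) (G x) : ℝ)
        = (inner ℝ (gradient (k x₀) x) (G x) : ℝ) := by
      intro x₀
      rw [gradient_log_comp (k x₀) x ((hk_diff x₀).differentiableAt) (hk_pos x₀ x).ne',
        real_inner_smul_left, ← mul_assoc, mul_inv_cancel₀ (hk_pos x₀ x).ne', one_mul]
    have h2 : m x * (inner ℝ (gradient (Real.log ∘ m) x) (G x) : ℝ)
        = (inner ℝ (gradient m x) (G x) : ℝ) := by
      have : gradient (Real.log ∘ m) x = (m x)⁻¹ • gradient m x :=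
        gradient_log_comp m x (hm_diff.differentiableAt) (hm_pos x).ne'
      rw [this, real_inner_smul_left, ← mul_assoc, mul_inv_cancel₀ (hm_pos x).ne', one_mul]
    simp_rw [h1, h2, hswap x]
    rw [real_inner_comm, ← integral_inner (hgrad_int x)]
    simp_rw [real_inner_comm]
  exact integral_congr_ae (Filter.Eventually.of_forall key)
end

section
/- Let d be a positive integer, let μ be a probability measure on EuclideanSpace ℝ (Fin d) (the law of X_{t_{n−1}}), and let k : EuclideanSpace ℝ (Fin d) → EuclideanSpace ℝ (Fin d) → ℝ be such that: for every x₀, the function k(x₀, ·) is differentiable and strictly positive; for every x, the function x₀ ↦ k(x₀, x) is integrable with respect to μ; the marginal m(x) := ∫ k(x₀, x) dμ(x₀) is strictly positive and differentiable; and differentiation under the integral sign holds, i.e., for every x, x₀ ↦ ∇_x k(x₀, x) is integrable with respect to μ and ∇m(x) = ∫ ∇_x k(x₀, x) dμ(x₀). Fix weights λ : Fin d → ℝ with λ_i ≥ 0 for all i. Write S(x₀, x)_i := ∂_i (log k(x₀, ·))(x) and T(x)_i := ∂_i (log ∘ m)(x) for the conditional and marginal scores. Let G : EuclideanSpace ℝ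 (Fin d) → EuclideanSpace ℝ (Fin d) be measurable, and assume that the functions (x₀, x) ↦ k(x₀, x) · ∑_i λ_i (G(x)_i − S(x₀, x)_i)², (x₀, x) ↦ k(x₀, x) · ∑_i λ_i S(x₀, x)_i², x ↦ m(x) · ∑_i λ_i (G(x)_i − T(x)_i)², and x ↦ m(x) · ∑_i λ_i T(x)_i² are all integrable (against μ ⊗ Lebesgue and Lebesgue, respectively). Then (1/2) ∫∫ k(x₀, x) ∑_i λ_i (G(x)_i − S(x₀, x)_i)² dμ(x₀) dx − (1/2) ∫ m(x) ∑_i λ_i (G(x)_i − T(x)_i)² dx = (1/2) ∫∫ k(x₀, x) ∑_i λ_i S(x₀, x)_i² dμ(x₀) dx − (1/2) ∫ m(x) ∑_i λ_i T(x)_i² dx; in particular the difference between the weighted conditional (denoising) score-matching objective and the weighted marginal score-matching objective does not depend on G. (This is the finite-dimensional core of Theorem 3 of the paper: the training objective L(θ) equals D_KL(P‖P^(θ)) up to a θ-independent constant C.) -/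
open MeasureTheory

/-- Finite-dimensional core of Theorem 3: the difference between the weighted
conditional (denoising) score-matching objective and the weighted marginal
score-matching objective does not depend on `G`. -/
theorem denoising_score_matching_constant_difference
    (d : ℕ) (hd : 0 < d)
    (μ : Measure (EuclideanSpace ℝ (Fin d))) [IsProbabilityMeasure μ]
    (k : EuclideanSpace ℝ (Fin d) → EuclideanSpace ℝ (Fin d) → ℝ)
    (m : EuclideanSpace ℝ (Fin d) → ℝ)
    (hk_diff : ∀ x₀, Differentiable ℝ (k x₀))
    (hk_pos : ∀ x₀ x, 0 < k x₀ x)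
    (hk_int : ∀ x, Integrable (fun x₀ => k x₀ x) μ)
    (hm : ∀ x, m x = ∫ x₀, k x₀ x ∂μ)
    (hm_pos : ∀ x, 0 < m x)
    (hm_diff : Differentiable ℝ m)
    (hgrad_int : ∀ x, Integrable (fun x₀ => gradient (k x₀) x) μ)
    (hswap : ∀ x, gradient m x = ∫ x₀, gradient (k x₀) x ∂μ)
    (lam : Fin d → ℝ) (hlam : ∀ i, 0 ≤ lam i)
    (S : EuclideanSpace ℝ (Fin d) → EuclideanSpace ℝ (Fin d) → EuclideanSpace ℝ (Fin d))
    (hS : ∀ x₀ x i, S x₀ x i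
      = fderiv ℝ (fun y => Real.log (k x₀ y)) x (EuclideanSpace.single i 1))
    (T : EuclideanSpace ℝ (Fin d) → EuclideanSpace ℝ (Fin d))
    (hT : ∀ x i, T x i = fderiv ℝ (Real.log ∘ m) x (EuclideanSpace.single i 1))
    (G : EuclideanSpace ℝ (Fin d) → EuclideanSpace ℝ (Fin d))
    (hG : Measurable G)
    (hint₁ : Integrable (fun q : EuclideanSpace ℝ (Fin d) × EuclideanSpace ℝ (Fin d) =>
        k q.1 q.2 * ∑ i, lam i * (G q.2 i - S q.1 q.2 i) ^ 2) (μ.prod volume))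
    (hint₂ : Integrable (fun q : EuclideanSpace ℝ (Fin d) × EuclideanSpace ℝ (Fin d) =>
        k q.1 q.2 * ∑ i, lam i * (S q.1 q.2 i) ^ 2) (μ.prod volume))
    (hint₃ : Integrable (fun x =>
        m x * ∑ i, lam i * (G x i - T x i) ^ 2) volume)
    (hint₄ : Integrable (fun x =>
        m x * ∑ i, lam i * (T x i) ^ 2) volume) :
    (1 / 2) * (∫ x, ∫ x₀, k x₀ x * ∑ i, lam i * (G x i - S x₀ x i) ^ 2 ∂μ)
        - (1 / 2) * ∫ x, m x * ∑ i, lam i * (G x i - T x i) ^ 2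
      = (1 / 2) * (∫ x, ∫ x₀, k x₀ x * ∑ i, lam i * (S x₀ x i) ^ 2 ∂μ)
        - (1 / 2) * ∫ x, m x * ∑ i, lam i * (T x i) ^ 2 := by
  classical
  -- fderiv in a coordinate direction equals the coordinate of the gradient
  have hfd : ∀ (f : EuclideanSpace ℝ (Fin d) → ℝ) (x : EuclideanSpace ℝ (Fin d)) (i : Fin d),
      fderiv ℝ f x (EuclideanSpace.single i 1) = gradient f x i := by
    intro f x i
    have h1 : (inner ℝ (gradient f x) (EuclideanSpace.single i (1:ℝ)) : ℝ)
        = fderiv ℝ f x (EuclideanSpace.single i 1) :=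
      InnerProductSpace.toDual_symm_apply
    rw [EuclideanSpace.inner_single_right] at h1
    simpa using h1.symm
  -- k * S = gradient of k
  have hkS : ∀ x₀ x i, k x₀ x * S x₀ x i = gradient (k x₀) x i := by
    intro x₀ x i
    rw [hS, fderiv.log (hk_diff x₀ x) (hk_pos x₀ x).ne']
    simp only [ContinuousLinearMap.coe_smul', Pi.smul_apply, smul_eq_mul]
    rw [hfd (k x₀) x i, ← mul_assoc, mul_inv_cancel₀ (hk_pos x₀ x).ne', one_mul]
  -- m * T = gradient of m
  have hmT : ∀ x i, m x * T x i = gradient m x i := by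
    intro x i
    have hcomp : (Real.log ∘ m) = fun y => Real.log (m y) := rfl
    rw [hT, hcomp, fderiv.log (hm_diff x) (hm_pos x).ne']
    simp only [ContinuousLinearMap.coe_smul', Pi.smul_apply, smul_eq_mul]
    rw [hfd m x i, ← mul_assoc, mul_inv_cancel₀ (hm_pos x).ne', one_mul]
  -- coordinates of the gradient identity
  have hcoord : ∀ (x : EuclideanSpace ℝ (Fin d)) (i : Fin d),
      gradient m x i = ∫ x₀, gradient (k x₀) x i ∂μ := by
    intro x i
    have := (EuclideanSpace.proj (𝕜 := ℝ) i).integral_comp_comm (hgrad_int x)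
    rw [hswap x]
    exact this.symm
  have hgradc_int : ∀ (x : EuclideanSpace ℝ (Fin d)) (i : Fin d),
      Integrable (fun x₀ => gradient (k x₀) x i) μ := by
    intro x i
    exact (EuclideanSpace.proj (𝕜 := ℝ) i).integrable_comp (hgrad_int x)
  -- the key pointwise (in x) identity, a.e.
  have key : ∀ᵐ x ∂(volume : Measure (EuclideanSpace ℝ (Fin d))),
      (∫ x₀, k x₀ x * ∑ i, lam i * (G x i - S x₀ x i) ^ 2 ∂μ)
          - m x * ∑ i, lam i * (G x i - T x i) ^ 2
        = (∫ x₀, k x₀ x * ∑ i, lam i * (S x₀ x i) ^ 2 ∂μ)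
          - m x * ∑ i, lam i * (T x i) ^ 2 := by
    filter_upwards [hint₁.prod_left_ae, hint₂.prod_left_ae] with x h₁ h₂
    set c₁ : ℝ := ∑ i, lam i * (G x i - T x i) ^ 2 with hc₁
    set c₂ : ℝ := ∑ i, lam i * (T x i) ^ 2 with hc₂
    -- pointwise identity in x₀
    have hpt : (fun x₀ => k x₀ x * ∑ i, lam i * (G x i - S x₀ x i) ^ 2)
        = fun x₀ => (k x₀ x * ∑ i, lam i * (S x₀ x i) ^ 2 + k x₀ x * c₁ - k x₀ x * c₂)
          + ∑ i, (2 * lam i * G x i) * (T x i * k x₀ x - gradient (k x₀) x i) := by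
      funext x₀
      have hgs : ∀ i, gradient (k x₀) x i = k x₀ x * S x₀ x i := fun i => (hkS x₀ x i).symm
      simp only [hgs, hc₁, hc₂, Finset.mul_sum]
      rw [← Finset.sum_add_distrib, ← Finset.sum_sub_distrib, ← Finset.sum_add_distrib]
      apply Finset.sum_congr rfl
      intro i _
      ring
    have hB_int : ∀ i : Fin d, Integrable
        (fun x₀ => (2 * lam i * G x i) * (T x i * k x₀ x - gradient (k x₀) x i)) μ := by
      intro i
      exact ((((hk_int x).const_mul (T x i)).sub (hgradc_int x i)).const_mul _)
    have hBsum_int : Integrable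
        (fun x₀ => ∑ i, (2 * lam i * G x i) * (T x i * k x₀ x - gradient (k x₀) x i)) μ :=
      integrable_finset_sum _ (fun i _ => hB_int i)
    have hg₁ : Integrable (fun x₀ => k x₀ x * c₁) μ := (hk_int x).mul_const c₁
    have hg₂ : Integrable (fun x₀ => k x₀ x * c₂) μ := (hk_int x).mul_const c₂
    have hBzero : ∀ i : Fin d,
        (∫ x₀, (2 * lam i * G x i) * (T x i * k x₀ x - gradient (k x₀) x i) ∂μ) = 0 := by
      intro i
      rw [integral_const_mul, integral_sub ((hk_int x).const_mul (T x i)) (hgradc_int x i),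
        integral_const_mul, ← hm x, ← hcoord x i, ← hmT x i]
      ring
    have hI1 : Integrable (fun x₀ => k x₀ x * ∑ i, lam i * (S x₀ x i) ^ 2 + k x₀ x * c₁) μ :=
      h₂.add hg₁
    have hI2 : Integrable
        (fun x₀ => k x₀ x * ∑ i, lam i * (S x₀ x i) ^ 2 + k x₀ x * c₁ - k x₀ x * c₂) μ :=
      hI1.sub hg₂
    rw [hpt, integral_add hI2 hBsum_int, integral_sub hI1 hg₂, integral_add h₂ hg₁,
      integral_finset_sum _ (fun i _ => hB_int i)]
    simp only [hBzero, Finset.sum_const_zero]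
    rw [integral_mul_const, integral_mul_const, ← hm x]
    ring
  -- integrate the a.e. identity
  have hA : Integrable
      (fun x => ∫ x₀, k x₀ x * ∑ i, lam i * (G x i - S x₀ x i) ^ 2 ∂μ) volume :=
    hint₁.integral_prod_right
  have hC : Integrable
      (fun x => ∫ x₀, k x₀ x * ∑ i, lam i * (S x₀ x i) ^ 2 ∂μ) volume :=
    hint₂.integral_prod_right
  have h5 := integral_congr_ae key
  rw [integral_sub hA hint₃, integral_sub hC hint₄] at h5
  linarith
end
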